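/- Let F be a finite field, c′ ≥ 2, and let S ∈ F be a secret shared by a uniformly random polynomial f(X) = S + a_1 X + … + a_{c′−1} X^{c′−1} with a_1,…,a_{c′−1} chosen independently and uniformly from F. Then for any set of at most c′−1 distinct nonzero evaluation points, the joint distribution of the shares (f(x_i)) at those points is independent of the secret S (i.e., uniform on F^{c′−1} when exactly c′−1 points are used). -/

import Mathlib

open Polynomial in
lemma exists_shift {F : Type*} [Field F] (c' : ℕ) (hc : 2 ≤ c')
    (t : ℕ) (ht : t ≤ c' - 1) (x : Fin t → F)
    (hx : Function.Injective x) (hx0 : ∀ i, x i ≠ 0) (c : F) :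
    ∃ d : Fin (c' - 1) → F, ∀ i, ∑ j, d j * (x i) ^ ((j : ℕ) + 1) = c := by
  set q : F[X] := Lagrange.interpolate Finset.univ x (fun i => c / x i) with hq
  set p : F[X] := X * q with hp
  have hqdeg : q.degree < t := by
    simpa [hq] using Lagrange.degree_interpolate_lt (s := Finset.univ) (v := x) (r := fun i => c / x i)
      (Set.injOn_of_injective hx)
  have hpdeg : p.natDegree < c' := by
    by_cases hq0 : q = 0
    · simp [hp, hq0]; omega
    · have h1 : q.natDegree < t := by
        rwa [Polynomial.degree_eq_natDegree hq0, Nat.cast_lt] at hqdeg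
      have : p.natDegree ≤ 1 + q.natDegree := by
        simpa using Polynomial.natDegree_mul_le (p := (X : F[X])) (q := q)
      omega
  refine ⟨fun j => p.coeff ((j : ℕ) + 1), fun i => ?_⟩
  have heval : p.eval (x i) = c := by
    have hnode : q.eval (x i) = c / x i :=
      Lagrange.eval_interpolate_at_node (v := x) (r := fun i => c / x i)
        (Set.injOn_of_injective hx) (Finset.mem_univ i)
    rw [hp]
    rw [Polynomial.eval_mul, Polynomial.eval_X, hnode,
      mul_div_cancel₀ _ (hx0 i)]
  have hsum : p.eval (x i) = ∑ k ∈ Finset.range c', p.coeff k * (x i) ^ k :=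
    Polynomial.eval_eq_sum_range' hpdeg (x i)
  have hc' : c' = (c' - 1) + 1 := by omega
  rw [hc', Finset.sum_range_succ'] at hsum
  have hcoeff0 : p.coeff 0 = 0 := by simp [hp, Polynomial.mul_coeff_zero]
  rw [hcoeff0] at hsum
  simp only [zero_mul, pow_zero, add_zero] at hsum
  rw [Fin.sum_univ_eq_sum_range (fun j => p.coeff (j + 1) * (x i) ^ (j + 1))]
  rw [← hsum, heval]

open scoped Classical in
theorem stmt3 {F : Type*} [Field F] [Fintype F] (c' : ℕ) (hc : 2 ≤ c')
    (t : ℕ) (ht : t ≤ c' - 1) (x : Fin t → F)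
    (hx : Function.Injective x) (hx0 : ∀ i, x i ≠ 0) (S S' : F) (y : Fin t → F) :
    (Finset.univ.filter fun a : Fin (c' - 1) → F =>
        ∀ i, S + ∑ j, a j * (x i) ^ ((j : ℕ) + 1) = y i).card =
    (Finset.univ.filter fun a : Fin (c' - 1) → F =>
        ∀ i, S' + ∑ j, a j * (x i) ^ ((j : ℕ) + 1) = y i).card := by
  obtain ⟨d, hd⟩ := exists_shift c' hc t ht x hx hx0 (S - S')
  apply Finset.card_bij (fun a _ => a + d)
  · intro a ha
    simp only [Finset.mem_filter, Finset.mem_univ, true_and] at ha ⊢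
    intro i
    have := ha i
    simp only [Pi.add_apply, add_mul, Finset.sum_add_distrib, hd i]
    rw [← this]; ring
  · intro a _ b _ h
    simpa using congrArg (fun f => f - d) h
  · intro b hb
    refine ⟨b - d, ?_, by simp⟩
    simp only [Finset.mem_filter, Finset.mem_univ, true_and] at hb ⊢
    intro i
    have := hb i
    simp only [Pi.sub_apply, sub_mul, Finset.sum_sub_distrib, hd i]
    rw [← this]; ring
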